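/- For each real ν, the function b_ν(t) = (√2/2)·(1 + (√6 - ν√(10t²+15))/(√30·ν + √6 - (√5·ν + 2)√(2t²+3)))·1/√(t²+1) satisfies the ODE db/dt = -PQ/2 + (P/(2t))(1-b²) - Qb on its domain of definition, where P(t) = √6·√(2t²+2)/√(2t²+3) and Q(t) = t/(t²+1), and b_ν(√6/2) = ν. -/

import Mathlib

set_option maxHeartbeats 1000000


/-- Metric coefficient `P(t) = √6·√(2t²+2)/√(2t²+3)` of the Stenzel metric in the variable `t = R₋`. -/
noncomputable def Pfun (t : ℝ) : ℝ := Real.sqrt 6 * Real.sqrt (2 * t ^ 2 + 2) / Real.sqrt (2 * t ^ 2 + 3)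

/-- Metric coefficient `Q(t) = t/(t²+1)`. -/
noncomputable def Qfun (t : ℝ) : ℝ := t / (t ^ 2 + 1)

/-- The explicit family `b_ν` of solutions of the reduced Spin(7) instanton ODE. -/
noncomputable def bNu (ν t : ℝ) : ℝ :=
  Real.sqrt 2 / 2 *
    (1 + (Real.sqrt 6 - ν * Real.sqrt (10 * t ^ 2 + 15)) /
      (Real.sqrt 30 * ν + Real.sqrt 6 - (Real.sqrt 5 * ν + 2) * Real.sqrt (2 * t ^ 2 + 3))) /
    Real.sqrt (t ^ 2 + 1)

/-- `b_ν` satisfies `db/dt = -PQ/2 + (P/(2t))(1-b²) - Qb` wherever its denominator does not vanish,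
and `b_ν(√6/2) = ν`. -/
theorem bNu_solves_reduced_spin7_ODE (ν : ℝ) :
    bNu ν (Real.sqrt 6 / 2) = ν ∧
    ∀ t > (0 : ℝ),
      Real.sqrt 30 * ν + Real.sqrt 6 - (Real.sqrt 5 * ν + 2) * Real.sqrt (2 * t ^ 2 + 3) ≠ 0 →
      HasDerivAt (bNu ν)
        (-(Pfun t * Qfun t) / 2 + Pfun t / (2 * t) * (1 - (bNu ν t) ^ 2) - Qfun t * bNu ν t) t := by
  have h6 : Real.sqrt 6 = Real.sqrt 2 * Real.sqrt 3 := by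
    rw [show (6:ℝ) = 2*3 by norm_num, Real.sqrt_mul (by norm_num)]
  have h30 : Real.sqrt 30 = Real.sqrt 2 * (Real.sqrt 3 * Real.sqrt 5) := by
    rw [show (30:ℝ) = 2*(3*5) by norm_num, Real.sqrt_mul (by norm_num),
      Real.sqrt_mul (by norm_num : (0:ℝ) ≤ 3)]
  have h15x : ∀ x : ℝ, Real.sqrt (10 * x ^ 2 + 15) = Real.sqrt 5 * Real.sqrt (2 * x ^ 2 + 3) := by
    intro x
    rw [show (10 * x ^ 2 + 15 : ℝ) = 5 * (2 * x ^ 2 + 3) by ring,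
      Real.sqrt_mul (by norm_num)]
  have h22x : ∀ x : ℝ, Real.sqrt (2 * x ^ 2 + 2) = Real.sqrt 2 * Real.sqrt (x ^ 2 + 1) := by
    intro x
    rw [show (2 * x ^ 2 + 2 : ℝ) = 2 * (x ^ 2 + 1) by ring, Real.sqrt_mul (by norm_num)]
  constructor
  · have h62 : (Real.sqrt 6 / 2) ^ 2 = 3 / 2 := by
      rw [div_pow, Real.sq_sqrt (by norm_num : (0:ℝ) ≤ 6)]; norm_num
    simp only [bNu]
    rw [show 10 * (Real.sqrt 6 / 2) ^ 2 + 15 = (30:ℝ) by rw [h62]; norm_num,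
      show 2 * (Real.sqrt 6 / 2) ^ 2 + 3 = (6:ℝ) by rw [h62]; norm_num,
      show (Real.sqrt 6 / 2) ^ 2 + 1 = (5/2:ℝ) by rw [h62]; norm_num]
    have h30' : Real.sqrt 30 = Real.sqrt 5 * Real.sqrt 6 := by
      rw [show (30:ℝ) = 5 * 6 by norm_num, Real.sqrt_mul (by norm_num)]
    have h52 : Real.sqrt (5/2) = Real.sqrt 5 / Real.sqrt 2 :=
      Real.sqrt_div (by norm_num) 2
    have e2 : Real.sqrt 2 ^ 2 = 2 := Real.sq_sqrt (by norm_num)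
    have e5 : Real.sqrt 5 ^ 2 = 5 := Real.sq_sqrt (by norm_num)
    have n2 : Real.sqrt 2 ≠ 0 := by positivity
    have n5 : Real.sqrt 5 ≠ 0 := by positivity
    have n6 : Real.sqrt 6 ≠ 0 := by positivity
    rw [h30', h52]
    have hden : Real.sqrt 5 * Real.sqrt 6 * ν + Real.sqrt 6 - (Real.sqrt 5 * ν + 2) * Real.sqrt 6
        = -Real.sqrt 6 := by ring
    rw [hden]
    field_simp
    ring_nf
    linear_combination (ν * Real.sqrt 5) * e2
  · intro t ht hD
    have hfun : bNu ν = fun x : ℝ =>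
        Real.sqrt 2 / 2 *
          (1 + (Real.sqrt 2 * Real.sqrt 3 - ν * (Real.sqrt 5 * Real.sqrt (2 * x ^ 2 + 3))) /
            (Real.sqrt 2 * (Real.sqrt 3 * Real.sqrt 5) * ν + Real.sqrt 2 * Real.sqrt 3 -
              (Real.sqrt 5 * ν + 2) * Real.sqrt (2 * x ^ 2 + 3))) /
          Real.sqrt (x ^ 2 + 1) := by
      funext x
      simp only [bNu]; rw [h6, h30, h15x x, mul_assoc]
    rw [h30, h6] at hD
    have hs0 : (0:ℝ) < Real.sqrt (2 * t ^ 2 + 3) := Real.sqrt_pos.mpr (by positivity)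
    have hu0 : (0:ℝ) < Real.sqrt (t ^ 2 + 1) := Real.sqrt_pos.mpr (by positivity)
    have hin : HasDerivAt (fun x : ℝ => 2 * x ^ 2 + 3) (2*((2:ℕ)*t^1)) t :=
      ((hasDerivAt_pow 2 t).const_mul (2:ℝ)).add_const (3:ℝ)
    have hsd : HasDerivAt (fun x : ℝ => Real.sqrt (2 * x ^ 2 + 3))
        ((2*((2:ℕ)*t^1)) / (2 * Real.sqrt (2 * t ^ 2 + 3))) t := hin.sqrt (by positivity)
    have hud : HasDerivAt (fun x : ℝ => Real.sqrt (x ^ 2 + 1))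
        (((2:ℕ)*t^1) / (2 * Real.sqrt (t ^ 2 + 1))) t :=
      ((hasDerivAt_pow 2 t).add_const (1:ℝ)).sqrt (by positivity)
    have hN : HasDerivAt (fun x : ℝ =>
        Real.sqrt 2 * Real.sqrt 3 - ν * (Real.sqrt 5 * Real.sqrt (2 * x ^ 2 + 3)))
        (-(ν * (Real.sqrt 5 * ((2*((2:ℕ)*t^1)) / (2 * Real.sqrt (2 * t ^ 2 + 3)))))) t :=
      ((hsd.const_mul (Real.sqrt 5)).const_mul ν).const_sub _
    have hDen : HasDerivAt (fun x : ℝ =>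
        Real.sqrt 2 * (Real.sqrt 3 * Real.sqrt 5) * ν + Real.sqrt 2 * Real.sqrt 3 -
          (Real.sqrt 5 * ν + 2) * Real.sqrt (2 * x ^ 2 + 3))
        (-((Real.sqrt 5 * ν + 2) * ((2*((2:ℕ)*t^1)) / (2 * Real.sqrt (2 * t ^ 2 + 3))))) t :=
      (hsd.const_mul (Real.sqrt 5 * ν + 2)).const_sub _
    have H := (((hN.div hDen hD).const_add (1:ℝ)).const_mul (Real.sqrt 2 / 2)).div hud hu0.ne'
    rw [hfun]
    convert H using 1
    · rfl
    · rfl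
    · rfl
    simp only [Pfun, Qfun, Pi.div_apply]; rw [h6, h22x t]
    set s := Real.sqrt (2 * t ^ 2 + 3) with hs
    set u := Real.sqrt (t ^ 2 + 1) with hu
    set d := Real.sqrt 2 * (Real.sqrt 3 * Real.sqrt 5) * ν + Real.sqrt 2 * Real.sqrt 3 - (Real.sqrt 5 * ν + 2) * s with hd
    have ht1 : t ^ 2 + 1 ≠ 0 := by positivity
    have hu2 : u ^ 2 = t ^ 2 + 1 := by rw [hu]; exact Real.sq_sqrt (by positivity)
    have hs2 : s ^ 2 = 2 * t ^ 2 + 3 := by rw [hs]; exact Real.sq_sqrt (by positivity)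
    have h2 : Real.sqrt 2 ^ 2 = 2 := Real.sq_sqrt (by norm_num)
    have h3 : Real.sqrt 3 ^ 2 = 3 := Real.sq_sqrt (by norm_num)
    have h5 : Real.sqrt 5 ^ 2 = 5 := Real.sq_sqrt (by norm_num)
    set_option maxHeartbeats 4000000 in
    field_simp
    set_option maxHeartbeats 4000000 in
    have key : (4 : ℝ) * (Real.sqrt 2) * (Real.sqrt 3) * u^4 * d^2 + (-1 : ℝ) * (Real.sqrt 2)^3 * (Real.sqrt 3) * u^2 * d^2 + (-2 : ℝ) * (Real.sqrt 2)^4 * (Real.sqrt 3)^2 * u^2 * d + (-1 : ℝ) * (Real.sqrt 2)^5 * (Real.sqrt 3)^3 * u^2 + (2 : ℝ) * ν * (Real.sqrt 2)^3 * (Real.sqrt 3) * (Real.sqrt 5) * u^2 * s * d + (2 : ℝ) * ν * (Real.sqrt 2)^4 * (Real.sqrt 3)^2 * (Real.sqrt 5) * u^2 * s + (-1 : ℝ) * ν^2 * (Real.sqrt 2)^3 * (Real.sqrt 3) * (Real.sqrt 5)^2 * u^2 * s^2 + (4 : ℝ) * t^2 * s * d^2 + (-4 : ℝ) * t^2 *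 u^2 * s * d^2 + (4 : ℝ) * t^2 * (Real.sqrt 2) * (Real.sqrt 3) * s * d + (-16 : ℝ) * t^2 * (Real.sqrt 2) * (Real.sqrt 3) * u^2 + (-4 : ℝ) * t^2 * (Real.sqrt 2) * (Real.sqrt 3) * u^2 * s * d + (4 : ℝ) * t^2 * (Real.sqrt 2) * (Real.sqrt 3) * u^4 * d^2 + (-2 : ℝ) * t^2 * (Real.sqrt 2)^3 * (Real.sqrt 3) * u^2 * d^2 + (-4 : ℝ) * t^2 * (Real.sqrt 2)^4 * (Real.sqrt 3)^2 * u^2 * d + (-2 : ℝ) * t^2 * (Real.sqrt 2)^5 * (Real.sqrt 3)^3 * u^2 + (-4 : ℝ) * t^2 * ν * (Real.sqrt 5) * s^2 * d + (8 : ℝ) * t^2 * ν * (Real.sqrt 5) * u^2 * d + (16 : ℝ) * t^2 * ν * (Real.sqrt 5) * u^2 * s + (4 : ℝ) * t^2 * ν * (Real.sqrt 5) * u^2 * s^2 * d + (-8 : ℝ) * t^2 * ν * (Real.sqrt 2) * (Real.sqrt 3) * (Real.sqrt 5) * u^2 + (4 : ℝ) * t^2 * ν * (Real.sqrt 2)^3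 * (Real.sqrt 3) * (Real.sqrt 5) * u^2 * s * d + (4 : ℝ) * t^2 * ν * (Real.sqrt 2)^4 * (Real.sqrt 3)^2 * (Real.sqrt 5) * u^2 * s + (8 : ℝ) * t^2 * ν^2 * (Real.sqrt 5)^2 * u^2 * s + (-2 : ℝ) * t^2 * ν^2 * (Real.sqrt 2)^3 * (Real.sqrt 3) * (Real.sqrt 5)^2 * u^2 * s^2 + (8 : ℝ) * t^4 * s * d^2 + (-4 : ℝ) * t^4 * u^2 * s * d^2 + (8 : ℝ) * t^4 * (Real.sqrt 2) * (Real.sqrt 3) * s * d + (-32 : ℝ) * t^4 * (Real.sqrt 2) * (Real.sqrt 3) * u^2 + (-4 : ℝ) * t^4 * (Real.sqrt 2) * (Real.sqrt 3) * u^2 * s * d + (-1 : ℝ) * t^4 * (Real.sqrt 2)^3 * (Real.sqrt 3) * u^2 * d^2 + (-2 : ℝ) * t^4 * (Real.sqrt 2)^4 * (Real.sqrt 3)^2 * u^2 * d + (-1 : ℝ) * t^4 * (Real.sqrt 2)^5 * (Real.sqrt 3)^3 * u^2 + (-8 : ℝ) * t^4 * ν * (Real.sqrt 5) * s^2 * d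 + (16 : ℝ) * t^4 * ν * (Real.sqrt 5) * u^2 * d + (32 : ℝ) * t^4 * ν * (Real.sqrt 5) * u^2 * s + (4 : ℝ) * t^4 * ν * (Real.sqrt 5) * u^2 * s^2 * d + (-16 : ℝ) * t^4 * ν * (Real.sqrt 2) * (Real.sqrt 3) * (Real.sqrt 5) * u^2 + (2 : ℝ) * t^4 * ν * (Real.sqrt 2)^3 * (Real.sqrt 3) * (Real.sqrt 5) * u^2 * s * d + (2 : ℝ) * t^4 * ν * (Real.sqrt 2)^4 * (Real.sqrt 3)^2 * (Real.sqrt 5) * u^2 * s + (16 : ℝ) * t^4 * ν^2 * (Real.sqrt 5)^2 * u^2 * s + (-1 : ℝ) * t^4 * ν^2 * (Real.sqrt 2)^3 * (Real.sqrt 3) * (Real.sqrt 5)^2 * u^2 * s^2 + (4 : ℝ) * t^6 * s * d^2 + (4 : ℝ) * t^6 * (Real.sqrt 2) * (Real.sqrt 3) * s * d + (-16 : ℝ) * t^6 * (Real.sqrt 2) * (Real.sqrt 3) * u^2 + (-4 : ℝ) * t^6 * ν * (Real.sqrt 5) * s^2 * d + (8 : ℝ) * t^6 * ν * (Real.sqrt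 5) * u^2 * d + (16 : ℝ) * t^6 * ν * (Real.sqrt 5) * u^2 * s + (-8 : ℝ) * t^6 * ν * (Real.sqrt 2) * (Real.sqrt 3) * (Real.sqrt 5) * u^2 + (8 : ℝ) * t^6 * ν^2 * (Real.sqrt 5)^2 * u^2 * s = 0 := by
      set_option maxHeartbeats 2000000 in
      linear_combination ((4 : ℝ) * (Real.sqrt 2) * (Real.sqrt 3) * u^4 * d + (-8 : ℝ) * (Real.sqrt 2) * (Real.sqrt 3) * u^4 * s + (4 : ℝ) * (Real.sqrt 2)^2 * (Real.sqrt 3)^2 * u^4 + (-1 : ℝ) * (Real.sqrt 2)^3 * (Real.sqrt 3) * u^2 * d + (2 : ℝ) * (Real.sqrt 2)^3 * (Real.sqrt 3) * u^2 * s + (-3 : ℝ) * (Real.sqrt 2)^4 * (Real.sqrt 3)^2 * u^2 + (-4 : ℝ) * ν * (Real.sqrt 2) * (Real.sqrt 3) * (Real.sqrt 5) * u^4 * s + (4 : ℝ) * ν * (Real.sqrt 2)^2 * (Real.sqrt 3)^2 * (Real.sqrt 5) * u^4 + (3 : ℝ) * ν * (Real.sqrt 2)^3 * (Real.sqrt 3)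 * (Real.sqrt 5) * u^2 * s + (-1 : ℝ) * ν * (Real.sqrt 2)^4 * (Real.sqrt 3)^2 * (Real.sqrt 5) * u^2 + (4 : ℝ) * t^2 * s * d + (-8 : ℝ) * t^2 * s^2 + (-4 : ℝ) * t^2 * u^2 * s * d + (8 : ℝ) * t^2 * u^2 * s^2 + (8 : ℝ) * t^2 * (Real.sqrt 2) * (Real.sqrt 3) * s + (-8 : ℝ) * t^2 * (Real.sqrt 2) * (Real.sqrt 3) * u^2 * s + (4 : ℝ) * t^2 * (Real.sqrt 2) * (Real.sqrt 3) * u^4 * d + (-8 : ℝ) * t^2 * (Real.sqrt 2) * (Real.sqrt 3) * u^4 * s + (4 : ℝ) * t^2 * (Real.sqrt 2)^2 * (Real.sqrt 3)^2 * u^4 + (-2 : ℝ) * t^2 * (Real.sqrt 2)^3 * (Real.sqrt 3) * u^2 * d + (4 : ℝ) * t^2 * (Real.sqrt 2)^3 * (Real.sqrt 3) * u^2 * s + (-6 : ℝ) * t^2 * (Real.sqrt 2)^4 * (Real.sqrt 3)^2 * u^2 + (-8 : ℝ) * t^2 * ν * (Real.sqrt 5) * s^2 + (8 : ℝ) * t^2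 * ν * (Real.sqrt 5) * u^2 + (8 : ℝ) * t^2 * ν * (Real.sqrt 5) * u^2 * s^2 + (4 : ℝ) * t^2 * ν * (Real.sqrt 2) * (Real.sqrt 3) * (Real.sqrt 5) * s + (-4 : ℝ) * t^2 * ν * (Real.sqrt 2) * (Real.sqrt 3) * (Real.sqrt 5) * u^2 * s + (-4 : ℝ) * t^2 * ν * (Real.sqrt 2) * (Real.sqrt 3) * (Real.sqrt 5) * u^4 * s + (4 : ℝ) * t^2 * ν * (Real.sqrt 2)^2 * (Real.sqrt 3)^2 * (Real.sqrt 5) * u^4 + (6 : ℝ) * t^2 * ν * (Real.sqrt 2)^3 * (Real.sqrt 3) * (Real.sqrt 5) * u^2 * s + (-2 : ℝ) * t^2 * ν * (Real.sqrt 2)^4 * (Real.sqrt 3)^2 * (Real.sqrt 5) * u^2 + (8 : ℝ) * t^4 * s * d + (-16 : ℝ) * t^4 * s^2 + (-4 : ℝ) * t^4 * u^2 * s * d + (8 : ℝ) * t^4 * u^2 * s^2 + (16 : ℝ) * t^4 * (Real.sqrt 2) * (Real.sqrt 3) * s + (-8 : ℝ) * t^4 * (Real.sqrt 2) * (Real.sqrt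 3) * u^2 * s + (-1 : ℝ) * t^4 * (Real.sqrt 2)^3 * (Real.sqrt 3) * u^2 * d + (2 : ℝ) * t^4 * (Real.sqrt 2)^3 * (Real.sqrt 3) * u^2 * s + (-3 : ℝ) * t^4 * (Real.sqrt 2)^4 * (Real.sqrt 3)^2 * u^2 + (-16 : ℝ) * t^4 * ν * (Real.sqrt 5) * s^2 + (16 : ℝ) * t^4 * ν * (Real.sqrt 5) * u^2 + (8 : ℝ) * t^4 * ν * (Real.sqrt 5) * u^2 * s^2 + (8 : ℝ) * t^4 * ν * (Real.sqrt 2) * (Real.sqrt 3) * (Real.sqrt 5) * s + (-4 : ℝ) * t^4 * ν * (Real.sqrt 2) * (Real.sqrt 3) * (Real.sqrt 5) * u^2 * s + (3 : ℝ) * t^4 * ν * (Real.sqrt 2)^3 * (Real.sqrt 3) * (Real.sqrt 5) * u^2 * s + (-1 : ℝ) * t^4 * ν * (Real.sqrt 2)^4 * (Real.sqrt 3)^2 * (Real.sqrt 5) * u^2 + (4 : ℝ) * t^6 * s * d + (-8 : ℝ) * t^6 * s^2 + (8 : ℝ) * t^6 * (Real.sqrt 2) * (Real.sqrt 3) * s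 + (-8 : ℝ) * t^6 * ν * (Real.sqrt 5) * s^2 + (8 : ℝ) * t^6 * ν * (Real.sqrt 5) * u^2 + (4 : ℝ) * t^6 * ν * (Real.sqrt 2) * (Real.sqrt 3) * (Real.sqrt 5) * s) * hd + ((16 : ℝ) * (Real.sqrt 3)^2 * u^2 * s + (-16 : ℝ) * (Real.sqrt 3)^2 * u^4 * s + (-4 : ℝ) * (Real.sqrt 2) * (Real.sqrt 3) * u^2 * s^2 + (-8 : ℝ) * (Real.sqrt 2) * (Real.sqrt 3)^3 * u^2 + (4 : ℝ) * (Real.sqrt 2) * (Real.sqrt 3)^3 * u^4 + (8 : ℝ) * (Real.sqrt 2)^2 * (Real.sqrt 3)^2 * u^2 * s + (-4 : ℝ) * (Real.sqrt 2)^3 * (Real.sqrt 3)^3 * u^2 + (24 : ℝ) * ν * (Real.sqrt 3)^2 * (Real.sqrt 5) * u^2 * s + (-24 : ℝ) * ν * (Real.sqrt 3)^2 * (Real.sqrt 5) * u^4 * s + (-8 : ℝ) * ν * (Real.sqrt 2) * (Real.sqrt 3) * (Real.sqrt 5) * u^2 * s^2 + (-8 : ℝ) * ν * (Real.sqrt 2)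 * (Real.sqrt 3)^3 * (Real.sqrt 5) * u^2 + (8 : ℝ) * ν * (Real.sqrt 2) * (Real.sqrt 3)^3 * (Real.sqrt 5) * u^4 + (12 : ℝ) * ν * (Real.sqrt 2)^2 * (Real.sqrt 3)^2 * (Real.sqrt 5) * u^2 * s + (-4 : ℝ) * ν * (Real.sqrt 2)^3 * (Real.sqrt 3)^3 * (Real.sqrt 5) * u^2 + (8 : ℝ) * ν^2 * (Real.sqrt 3)^2 * (Real.sqrt 5)^2 * u^2 * s + (-8 : ℝ) * ν^2 * (Real.sqrt 3)^2 * (Real.sqrt 5)^2 * u^4 * s + (-4 : ℝ) * ν^2 * (Real.sqrt 2) * (Real.sqrt 3) * (Real.sqrt 5)^2 * u^2 * s^2 + (-2 : ℝ) * ν^2 * (Real.sqrt 2) * (Real.sqrt 3)^3 * (Real.sqrt 5)^2 * u^2 + (4 : ℝ) * ν^2 * (Real.sqrt 2) * (Real.sqrt 3)^3 * (Real.sqrt 5)^2 * u^4 + (4 : ℝ) * ν^2 * (Real.sqrt 2)^2 * (Real.sqrt 3)^2 * (Real.sqrt 5)^2 * u^2 * s + (-1 : ℝ) * ν^2 * (Real.sqrt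 2)^3 * (Real.sqrt 3)^3 * (Real.sqrt 5)^2 * u^2 + (8 : ℝ) * t^2 * (Real.sqrt 3)^2 * s + (24 : ℝ) * t^2 * (Real.sqrt 3)^2 * u^2 * s + (-16 : ℝ) * t^2 * (Real.sqrt 3)^2 * u^4 * s + (-8 : ℝ) * t^2 * (Real.sqrt 2) * (Real.sqrt 3) * u^2 * s^2 + (-16 : ℝ) * t^2 * (Real.sqrt 2) * (Real.sqrt 3)^3 * u^2 + (4 : ℝ) * t^2 * (Real.sqrt 2) * (Real.sqrt 3)^3 * u^4 + (16 : ℝ) * t^2 * (Real.sqrt 2)^2 * (Real.sqrt 3)^2 * u^2 * s + (-8 : ℝ) * t^2 * (Real.sqrt 2)^3 * (Real.sqrt 3)^3 * u^2 + (12 : ℝ) * t^2 * ν * (Real.sqrt 3)^2 * (Real.sqrt 5) * s + (36 : ℝ) * t^2 * ν * (Real.sqrt 3)^2 * (Real.sqrt 5) * u^2 * s + (-24 : ℝ) * t^2 * ν * (Real.sqrt 3)^2 * (Real.sqrt 5) * u^4 * s + (-16 : ℝ) * t^2 * ν * (Real.sqrt 2) * (Real.sqrt 3) * (Real.sqrt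 5) * u^2 * s^2 + (-16 : ℝ) * t^2 * ν * (Real.sqrt 2) * (Real.sqrt 3)^3 * (Real.sqrt 5) * u^2 + (8 : ℝ) * t^2 * ν * (Real.sqrt 2) * (Real.sqrt 3)^3 * (Real.sqrt 5) * u^4 + (24 : ℝ) * t^2 * ν * (Real.sqrt 2)^2 * (Real.sqrt 3)^2 * (Real.sqrt 5) * u^2 * s + (-8 : ℝ) * t^2 * ν * (Real.sqrt 2)^3 * (Real.sqrt 3)^3 * (Real.sqrt 5) * u^2 + (4 : ℝ) * t^2 * ν^2 * (Real.sqrt 3)^2 * (Real.sqrt 5)^2 * s + (12 : ℝ) * t^2 * ν^2 * (Real.sqrt 3)^2 * (Real.sqrt 5)^2 * u^2 * s + (-8 : ℝ) * t^2 * ν^2 * (Real.sqrt 3)^2 * (Real.sqrt 5)^2 * u^4 * s + (-8 : ℝ) * t^2 * ν^2 * (Real.sqrt 2) * (Real.sqrt 3) * (Real.sqrt 5)^2 * u^2 * s^2 + (-4 : ℝ) * t^2 * ν^2 * (Real.sqrt 2) * (Real.sqrt 3)^3 * (Real.sqrt 5)^2 * u^2 + (4 : ℝ) * t^2 * ν^2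 * (Real.sqrt 2) * (Real.sqrt 3)^3 * (Real.sqrt 5)^2 * u^4 + (8 : ℝ) * t^2 * ν^2 * (Real.sqrt 2)^2 * (Real.sqrt 3)^2 * (Real.sqrt 5)^2 * u^2 * s + (-2 : ℝ) * t^2 * ν^2 * (Real.sqrt 2)^3 * (Real.sqrt 3)^3 * (Real.sqrt 5)^2 * u^2 + (16 : ℝ) * t^4 * (Real.sqrt 3)^2 * s + (8 : ℝ) * t^4 * (Real.sqrt 3)^2 * u^2 * s + (-4 : ℝ) * t^4 * (Real.sqrt 2) * (Real.sqrt 3) * u^2 * s^2 + (-8 : ℝ) * t^4 * (Real.sqrt 2) * (Real.sqrt 3)^3 * u^2 + (8 : ℝ) * t^4 * (Real.sqrt 2)^2 * (Real.sqrt 3)^2 * u^2 * s + (-4 : ℝ) * t^4 * (Real.sqrt 2)^3 * (Real.sqrt 3)^3 * u^2 + (24 : ℝ) * t^4 * ν * (Real.sqrt 3)^2 * (Real.sqrt 5) * s + (12 : ℝ) * t^4 * ν * (Real.sqrt 3)^2 * (Real.sqrt 5) * u^2 * s + (-8 : ℝ) * t^4 * ν * (Real.sqrt 2) * (Real.sqrt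 3) * (Real.sqrt 5) * u^2 * s^2 + (-8 : ℝ) * t^4 * ν * (Real.sqrt 2) * (Real.sqrt 3)^3 * (Real.sqrt 5) * u^2 + (12 : ℝ) * t^4 * ν * (Real.sqrt 2)^2 * (Real.sqrt 3)^2 * (Real.sqrt 5) * u^2 * s + (-4 : ℝ) * t^4 * ν * (Real.sqrt 2)^3 * (Real.sqrt 3)^3 * (Real.sqrt 5) * u^2 + (8 : ℝ) * t^4 * ν^2 * (Real.sqrt 3)^2 * (Real.sqrt 5)^2 * s + (4 : ℝ) * t^4 * ν^2 * (Real.sqrt 3)^2 * (Real.sqrt 5)^2 * u^2 * s + (-4 : ℝ) * t^4 * ν^2 * (Real.sqrt 2) * (Real.sqrt 3) * (Real.sqrt 5)^2 * u^2 * s^2 + (-2 : ℝ) * t^4 * ν^2 * (Real.sqrt 2) * (Real.sqrt 3)^3 * (Real.sqrt 5)^2 * u^2 + (4 : ℝ) * t^4 * ν^2 * (Real.sqrt 2)^2 * (Real.sqrt 3)^2 * (Real.sqrt 5)^2 * u^2 * s + (-1 : ℝ) * t^4 * ν^2 * (Real.sqrt 2)^3 * (Real.sqrt 3)^3 * (Real.sqrt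 5)^2 * u^2 + (8 : ℝ) * t^6 * (Real.sqrt 3)^2 * s + (12 : ℝ) * t^6 * ν * (Real.sqrt 3)^2 * (Real.sqrt 5) * s + (4 : ℝ) * t^6 * ν^2 * (Real.sqrt 3)^2 * (Real.sqrt 5)^2 * s) * h2 + ((32 : ℝ) * u^2 * s + (-32 : ℝ) * u^4 * s + (-16 : ℝ) * (Real.sqrt 2) * (Real.sqrt 3) * u^2 + (8 : ℝ) * (Real.sqrt 2) * (Real.sqrt 3) * u^4 + (48 : ℝ) * ν * (Real.sqrt 5) * u^2 * s + (-48 : ℝ) * ν * (Real.sqrt 5) * u^4 * s + (-16 : ℝ) * ν * (Real.sqrt 2) * (Real.sqrt 3) * (Real.sqrt 5) * u^2 + (16 : ℝ) * ν * (Real.sqrt 2) * (Real.sqrt 3) * (Real.sqrt 5) * u^4 + (16 : ℝ) * ν^2 * (Real.sqrt 5)^2 * u^2 * s + (-16 : ℝ) * ν^2 * (Real.sqrt 5)^2 * u^4 * s + (-4 : ℝ) * ν^2 * (Real.sqrt 2) * (Real.sqrt 3) * (Real.sqrt 5)^2 * u^2 + (8 : ℝ) * ν^2 * (Real.sqrt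 2) * (Real.sqrt 3) * (Real.sqrt 5)^2 * u^4 + (16 : ℝ) * t^2 * s + (48 : ℝ) * t^2 * u^2 * s + (-32 : ℝ) * t^2 * u^4 * s + (-32 : ℝ) * t^2 * (Real.sqrt 2) * (Real.sqrt 3) * u^2 + (8 : ℝ) * t^2 * (Real.sqrt 2) * (Real.sqrt 3) * u^4 + (24 : ℝ) * t^2 * ν * (Real.sqrt 5) * s + (72 : ℝ) * t^2 * ν * (Real.sqrt 5) * u^2 * s + (-48 : ℝ) * t^2 * ν * (Real.sqrt 5) * u^4 * s + (-32 : ℝ) * t^2 * ν * (Real.sqrt 2) * (Real.sqrt 3) * (Real.sqrt 5) * u^2 + (16 : ℝ) * t^2 * ν * (Real.sqrt 2) * (Real.sqrt 3) * (Real.sqrt 5) * u^4 + (8 : ℝ) * t^2 * ν^2 * (Real.sqrt 5)^2 * s + (24 : ℝ) * t^2 * ν^2 * (Real.sqrt 5)^2 * u^2 * s + (-16 : ℝ) * t^2 * ν^2 * (Real.sqrt 5)^2 * u^4 * s + (-8 : ℝ) * t^2 * ν^2 * (Real.sqrt 2) * (Real.sqrt 3) * (Real.sqrt 5)^2 * u^2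 + (8 : ℝ) * t^2 * ν^2 * (Real.sqrt 2) * (Real.sqrt 3) * (Real.sqrt 5)^2 * u^4 + (32 : ℝ) * t^4 * s + (16 : ℝ) * t^4 * u^2 * s + (-16 : ℝ) * t^4 * (Real.sqrt 2) * (Real.sqrt 3) * u^2 + (48 : ℝ) * t^4 * ν * (Real.sqrt 5) * s + (24 : ℝ) * t^4 * ν * (Real.sqrt 5) * u^2 * s + (-16 : ℝ) * t^4 * ν * (Real.sqrt 2) * (Real.sqrt 3) * (Real.sqrt 5) * u^2 + (16 : ℝ) * t^4 * ν^2 * (Real.sqrt 5)^2 * s + (8 : ℝ) * t^4 * ν^2 * (Real.sqrt 5)^2 * u^2 * s + (-4 : ℝ) * t^4 * ν^2 * (Real.sqrt 2) * (Real.sqrt 3) * (Real.sqrt 5)^2 * u^2 + (16 : ℝ) * t^6 * s + (24 : ℝ) * t^6 * ν * (Real.sqrt 5) * s + (8 : ℝ) * t^6 * ν^2 * (Real.sqrt 5)^2 * s) * h3 + ((48 : ℝ) * ν^2 * u^2 * s + (-48 : ℝ) * ν^2 * u^4 * s + (-12 : ℝ) * ν^2 * (Real.sqrt 2) * (Real.sqrt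 3) * u^2 + (-8 : ℝ) * ν^2 * (Real.sqrt 2) * (Real.sqrt 3) * u^2 * s^2 + (24 : ℝ) * ν^2 * (Real.sqrt 2) * (Real.sqrt 3) * u^4 + (4 : ℝ) * ν^2 * (Real.sqrt 2) * (Real.sqrt 3) * u^4 * s^2 + (24 : ℝ) * t^2 * ν^2 * s + (8 : ℝ) * t^2 * ν^2 * s^3 + (72 : ℝ) * t^2 * ν^2 * u^2 * s + (-8 : ℝ) * t^2 * ν^2 * u^2 * s^3 + (-48 : ℝ) * t^2 * ν^2 * u^4 * s + (-12 : ℝ) * t^2 * ν^2 * (Real.sqrt 2) * (Real.sqrt 3) * s^2 + (-16 : ℝ) * t^2 * ν^2 * (Real.sqrt 2) * (Real.sqrt 3) * u^2 + (-4 : ℝ) * t^2 * ν^2 * (Real.sqrt 2) * (Real.sqrt 3) * u^2 * s^2 + (24 : ℝ) * t^2 * ν^2 * (Real.sqrt 2) * (Real.sqrt 3) * u^4 + (4 : ℝ) * t^2 * ν^2 * (Real.sqrt 2) * (Real.sqrt 3) * u^4 * s^2 + (48 : ℝ) * t^4 * ν^2 * s + (16 : ℝ) * t^4 * ν^2 *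 s^3 + (24 : ℝ) * t^4 * ν^2 * u^2 * s + (-8 : ℝ) * t^4 * ν^2 * u^2 * s^3 + (-24 : ℝ) * t^4 * ν^2 * (Real.sqrt 2) * (Real.sqrt 3) * s^2 + (4 : ℝ) * t^4 * ν^2 * (Real.sqrt 2) * (Real.sqrt 3) * u^2 + (4 : ℝ) * t^4 * ν^2 * (Real.sqrt 2) * (Real.sqrt 3) * u^2 * s^2 + (24 : ℝ) * t^6 * ν^2 * s + (8 : ℝ) * t^6 * ν^2 * s^3 + (-12 : ℝ) * t^6 * ν^2 * (Real.sqrt 2) * (Real.sqrt 3) * s^2 + (8 : ℝ) * t^6 * ν^2 * (Real.sqrt 2) * (Real.sqrt 3) * u^2) * h5 + ((-96 : ℝ) * u^2 * s + (-24 : ℝ) * (Real.sqrt 2) * (Real.sqrt 3) + (8 : ℝ) * (Real.sqrt 2) * (Real.sqrt 3) * s^2 + (24 : ℝ) * (Real.sqrt 2) * (Real.sqrt 3) * u^2 + (16 : ℝ) * (Real.sqrt 2) * (Real.sqrt 3) * u^2 * s^2 + (-144 : ℝ) * ν * (Real.sqrt 5) * u^2 * s + (48 : ℝ) * ν * (Real.sqrt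 2) * (Real.sqrt 3) * (Real.sqrt 5) * u^2 + (16 : ℝ) * ν * (Real.sqrt 2) * (Real.sqrt 3) * (Real.sqrt 5) * u^2 * s^2 + (-240 : ℝ) * ν^2 * u^2 * s + (60 : ℝ) * ν^2 * (Real.sqrt 2) * (Real.sqrt 3) + (-20 : ℝ) * ν^2 * (Real.sqrt 2) * (Real.sqrt 3) * s^2 + (120 : ℝ) * ν^2 * (Real.sqrt 2) * (Real.sqrt 3) * u^2 + (20 : ℝ) * ν^2 * (Real.sqrt 2) * (Real.sqrt 3) * u^2 * s^2 + (-48 : ℝ) * t^2 * s + (-16 : ℝ) * t^2 * s^3 + (-96 : ℝ) * t^2 * u^2 * s + (-64 : ℝ) * t^2 * (Real.sqrt 2) * (Real.sqrt 3) + (40 : ℝ) * t^2 * (Real.sqrt 2) * (Real.sqrt 3) * s^2 + (24 : ℝ) * t^2 * (Real.sqrt 2) * (Real.sqrt 3) * u^2 + (16 : ℝ) * t^2 * (Real.sqrt 2) * (Real.sqrt 3) * u^2 * s^2 + (-72 : ℝ) * t^2 * ν * (Real.sqrt 5) * s + (-24 : ℝ) * t^2 * ν * (Real.sqrt 5) *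 s^3 + (-144 : ℝ) * t^2 * ν * (Real.sqrt 5) * u^2 * s + (32 : ℝ) * t^2 * ν * (Real.sqrt 2) * (Real.sqrt 3) * (Real.sqrt 5) * s^2 + (48 : ℝ) * t^2 * ν * (Real.sqrt 2) * (Real.sqrt 3) * (Real.sqrt 5) * u^2 + (16 : ℝ) * t^2 * ν * (Real.sqrt 2) * (Real.sqrt 3) * (Real.sqrt 5) * u^2 * s^2 + (-120 : ℝ) * t^2 * ν^2 * s + (-40 : ℝ) * t^2 * ν^2 * s^3 + (-240 : ℝ) * t^2 * ν^2 * u^2 * s + (160 : ℝ) * t^2 * ν^2 * (Real.sqrt 2) * (Real.sqrt 3) + (20 : ℝ) * t^2 * ν^2 * (Real.sqrt 2) * (Real.sqrt 3) * s^2 + (120 : ℝ) * t^2 * ν^2 * (Real.sqrt 2) * (Real.sqrt 3) * u^2 + (20 : ℝ) * t^2 * ν^2 * (Real.sqrt 2) * (Real.sqrt 3) * u^2 * s^2 + (-48 : ℝ) * t^4 * s + (-16 : ℝ) * t^4 * s^3 + (-56 : ℝ) * t^4 * (Real.sqrt 2) * (Real.sqrt 3) + (32 : ℝ) * t^4 *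 (Real.sqrt 2) * (Real.sqrt 3) * s^2 + (-72 : ℝ) * t^4 * ν * (Real.sqrt 5) * s + (-24 : ℝ) * t^4 * ν * (Real.sqrt 5) * s^3 + (32 : ℝ) * t^4 * ν * (Real.sqrt 2) * (Real.sqrt 3) * (Real.sqrt 5) * s^2 + (-120 : ℝ) * t^4 * ν^2 * s + (-40 : ℝ) * t^4 * ν^2 * s^3 + (140 : ℝ) * t^4 * ν^2 * (Real.sqrt 2) * (Real.sqrt 3) + (40 : ℝ) * t^4 * ν^2 * (Real.sqrt 2) * (Real.sqrt 3) * s^2 + (-16 : ℝ) * t^6 * (Real.sqrt 2) * (Real.sqrt 3) + (40 : ℝ) * t^6 * ν^2 * (Real.sqrt 2) * (Real.sqrt 3)) * hu2 + ((8 : ℝ) * (Real.sqrt 2) * (Real.sqrt 3) + (-20 : ℝ) * ν^2 * (Real.sqrt 2) * (Real.sqrt 3) + (24 : ℝ) * t^2 * (Real.sqrt 2) * (Real.sqrt 3) + (-60 : ℝ) * t^2 * ν^2 * (Real.sqrt 2) * (Real.sqrt 3) + (24 : ℝ) * t^4 * (Real.sqrt 2) * (Real.sqrt 3) + (-60 :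 ℝ) * t^4 * ν^2 * (Real.sqrt 2) * (Real.sqrt 3) + (8 : ℝ) * t^6 * (Real.sqrt 2) * (Real.sqrt 3) + (-20 : ℝ) * t^6 * ν^2 * (Real.sqrt 2) * (Real.sqrt 3)) * hs2
    set_option maxHeartbeats 4000000 in
    linear_combination ((4:ℝ)*s*t^2*d + (4:ℝ)*s*t^4*d + (-4:ℝ)*s*u^2*t^2*d + (-8:ℝ)*s^2*t^2 + (-8:ℝ)*s^2*t^4 + (8:ℝ)*s^2*u^2*t^2 + (8:ℝ)*(Real.sqrt 5)*u^2*t^2*ν + (8:ℝ)*(Real.sqrt 5)*u^2*t^4*ν + (-8:ℝ)*(Real.sqrt 5)*s^2*t^2*ν + (-8:ℝ)*(Real.sqrt 5)*s^2*t^4*ν + (8:ℝ)*(Real.sqrt 5)*s^2*u^2*t^2*ν + (4:ℝ)*(Real.sqrt 2)*(Real.sqrt 3)*u^4*d + (8:ℝ)*(Real.sqrt 2)*(Real.sqrt 3)*s*t^2 + (8:ℝ)*(Real.sqrt 2)*(Real.sqrt 3)*s*t^4 + (-8:ℝ)*(Real.sqrt 2)*(Real.sqrt 3)*s*u^2*t^2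 + (-8:ℝ)*(Real.sqrt 2)*(Real.sqrt 3)*s*u^4 + (4:ℝ)*(Real.sqrt 2)*(Real.sqrt 3)*(Real.sqrt 5)*s*t^2*ν + (4:ℝ)*(Real.sqrt 2)*(Real.sqrt 3)*(Real.sqrt 5)*s*t^4*ν + (-4:ℝ)*(Real.sqrt 2)*(Real.sqrt 3)*(Real.sqrt 5)*s*u^2*t^2*ν + (-4:ℝ)*(Real.sqrt 2)*(Real.sqrt 3)*(Real.sqrt 5)*s*u^4*ν + (4:ℝ)*(Real.sqrt 2)^2*(Real.sqrt 3)^2*u^4 + (4:ℝ)*(Real.sqrt 2)^2*(Real.sqrt 3)^2*(Real.sqrt 5)*u^4*ν + (-1:ℝ)*(Real.sqrt 2)^3*(Real.sqrt 3)*u^2*d + (-1:ℝ)*(Real.sqrt 2)^3*(Real.sqrt 3)*u^2*t^2*d + (2:ℝ)*(Real.sqrt 2)^3*(Real.sqrt 3)*s*u^2 + (2:ℝ)*(Real.sqrt 2)^3*(Real.sqrt 3)*s*u^2*t^2 + (3:ℝ)*(Real.sqrt 2)^3*(Real.sqrt 3)*(Real.sqrt 5)*s*u^2*ν + (3:ℝ)*(Real.sqrt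 2)^3*(Real.sqrt 3)*(Real.sqrt 5)*s*u^2*t^2*ν + (-3:ℝ)*(Real.sqrt 2)^4*(Real.sqrt 3)^2*u^2 + (-3:ℝ)*(Real.sqrt 2)^4*(Real.sqrt 3)^2*u^2*t^2 + (-1:ℝ)*(Real.sqrt 2)^4*(Real.sqrt 3)^2*(Real.sqrt 5)*u^2*ν + (-1:ℝ)*(Real.sqrt 2)^4*(Real.sqrt 3)^2*(Real.sqrt 5)*u^2*t^2*ν) * hd + ((-96:ℝ)*s + (-240:ℝ)*s*ν^2 + (-96:ℝ)*s*t^2 + (-240:ℝ)*s*t^2*ν^2 + (-16:ℝ)*s^3*t^2 + (-144:ℝ)*(Real.sqrt 5)*s*ν + (-144:ℝ)*(Real.sqrt 5)*s*t^2*ν + (-24:ℝ)*(Real.sqrt 5)*s^3*t^2*ν + (-8:ℝ)*(Real.sqrt 5)^2*s^3*t^2*ν^2 + (72:ℝ)*(Real.sqrt 2)*(Real.sqrt 3) + (180:ℝ)*(Real.sqrt 2)*(Real.sqrt 3)*ν^2 + (88:ℝ)*(Real.sqrt 2)*(Real.sqrt 3)*t^2 + (220:ℝ)*(Real.sqrt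 2)*(Real.sqrt 3)*t^2*ν^2 + (16:ℝ)*(Real.sqrt 2)*(Real.sqrt 3)*t^4 + (40:ℝ)*(Real.sqrt 2)*(Real.sqrt 3)*t^4*ν^2 + (24:ℝ)*(Real.sqrt 2)*(Real.sqrt 3)*s^2*t^2 + (16:ℝ)*(Real.sqrt 2)*(Real.sqrt 3)*s^2*u^2 + (96:ℝ)*(Real.sqrt 2)*(Real.sqrt 3)*(Real.sqrt 5)*ν + (128:ℝ)*(Real.sqrt 2)*(Real.sqrt 3)*(Real.sqrt 5)*t^2*ν + (32:ℝ)*(Real.sqrt 2)*(Real.sqrt 3)*(Real.sqrt 5)*t^4*ν + (32:ℝ)*(Real.sqrt 2)*(Real.sqrt 3)*(Real.sqrt 5)*s^2*t^2*ν + (16:ℝ)*(Real.sqrt 2)*(Real.sqrt 3)*(Real.sqrt 5)*s^2*u^2*ν + (8:ℝ)*(Real.sqrt 2)*(Real.sqrt 3)*(Real.sqrt 5)^2*t^2*ν^2 + (8:ℝ)*(Real.sqrt 2)*(Real.sqrt 3)*(Real.sqrt 5)^2*t^4*ν^2 + (12:ℝ)*(Real.sqrt 2)*(Real.sqrt 3)*(Real.sqrt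 5)^2*s^2*t^2*ν^2 + (4:ℝ)*(Real.sqrt 2)*(Real.sqrt 3)*(Real.sqrt 5)^2*s^2*u^2*ν^2 + (-8:ℝ)*(Real.sqrt 2)^2*(Real.sqrt 3)^2*s*t^2 + (-16:ℝ)*(Real.sqrt 2)^2*(Real.sqrt 3)^2*s*u^2 + (-12:ℝ)*(Real.sqrt 2)^2*(Real.sqrt 3)^2*(Real.sqrt 5)*s*t^2*ν + (-24:ℝ)*(Real.sqrt 2)^2*(Real.sqrt 3)^2*(Real.sqrt 5)*s*u^2*ν + (-4:ℝ)*(Real.sqrt 2)^2*(Real.sqrt 3)^2*(Real.sqrt 5)^2*s*t^2*ν^2 + (-8:ℝ)*(Real.sqrt 2)^2*(Real.sqrt 3)^2*(Real.sqrt 5)^2*s*u^2*ν^2 + (-4:ℝ)*(Real.sqrt 2)^3*(Real.sqrt 3)*s^2 + (-4:ℝ)*(Real.sqrt 2)^3*(Real.sqrt 3)*s^2*t^2 + (-8:ℝ)*(Real.sqrt 2)^3*(Real.sqrt 3)*(Real.sqrt 5)*s^2*ν + (-8:ℝ)*(Real.sqrt 2)^3*(Real.sqrt 3)*(Real.sqrt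 5)*s^2*t^2*ν + (-4:ℝ)*(Real.sqrt 2)^3*(Real.sqrt 3)*(Real.sqrt 5)^2*s^2*ν^2 + (-4:ℝ)*(Real.sqrt 2)^3*(Real.sqrt 3)*(Real.sqrt 5)^2*s^2*t^2*ν^2 + (4:ℝ)*(Real.sqrt 2)^3*(Real.sqrt 3)^3*u^2 + (8:ℝ)*(Real.sqrt 2)^3*(Real.sqrt 3)^3*(Real.sqrt 5)*u^2*ν + (4:ℝ)*(Real.sqrt 2)^3*(Real.sqrt 3)^3*(Real.sqrt 5)^2*u^2*ν^2 + (8:ℝ)*(Real.sqrt 2)^4*(Real.sqrt 3)^2*s + (8:ℝ)*(Real.sqrt 2)^4*(Real.sqrt 3)^2*s*t^2 + (12:ℝ)*(Real.sqrt 2)^4*(Real.sqrt 3)^2*(Real.sqrt 5)*s*ν + (12:ℝ)*(Real.sqrt 2)^4*(Real.sqrt 3)^2*(Real.sqrt 5)*s*t^2*ν + (4:ℝ)*(Real.sqrt 2)^4*(Real.sqrt 3)^2*(Real.sqrt 5)^2*s*ν^2 + (4:ℝ)*(Real.sqrt 2)^4*(Real.sqrt 3)^2*(Real.sqrt 5)^2*s*t^2*ν^2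 + (-4:ℝ)*(Real.sqrt 2)^5*(Real.sqrt 3)^3 + (-4:ℝ)*(Real.sqrt 2)^5*(Real.sqrt 3)^3*t^2 + (-4:ℝ)*(Real.sqrt 2)^5*(Real.sqrt 3)^3*(Real.sqrt 5)*ν + (-4:ℝ)*(Real.sqrt 2)^5*(Real.sqrt 3)^3*(Real.sqrt 5)*t^2*ν + (-1:ℝ)*(Real.sqrt 2)^5*(Real.sqrt 3)^3*(Real.sqrt 5)^2*ν^2 + (-1:ℝ)*(Real.sqrt 2)^5*(Real.sqrt 3)^3*(Real.sqrt 5)^2*t^2*ν^2) * hu2 + ((16:ℝ)*(Real.sqrt 2)*(Real.sqrt 3)*u^2 + (16:ℝ)*(Real.sqrt 2)*(Real.sqrt 3)*u^2*t^2 + (16:ℝ)*(Real.sqrt 2)*(Real.sqrt 3)*(Real.sqrt 5)*u^2*ν + (16:ℝ)*(Real.sqrt 2)*(Real.sqrt 3)*(Real.sqrt 5)*u^2*t^2*ν + (4:ℝ)*(Real.sqrt 2)*(Real.sqrt 3)*(Real.sqrt 5)^2*u^2*ν^2 + (4:ℝ)*(Real.sqrt 2)*(Real.sqrt 3)*(Real.sqrt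 5)^2*u^2*t^2*ν^2 + (-4:ℝ)*(Real.sqrt 2)^3*(Real.sqrt 3) + (-8:ℝ)*(Real.sqrt 2)^3*(Real.sqrt 3)*t^2 + (-4:ℝ)*(Real.sqrt 2)^3*(Real.sqrt 3)*t^4 + (-8:ℝ)*(Real.sqrt 2)^3*(Real.sqrt 3)*(Real.sqrt 5)*ν + (-16:ℝ)*(Real.sqrt 2)^3*(Real.sqrt 3)*(Real.sqrt 5)*t^2*ν + (-8:ℝ)*(Real.sqrt 2)^3*(Real.sqrt 3)*(Real.sqrt 5)*t^4*ν + (-4:ℝ)*(Real.sqrt 2)^3*(Real.sqrt 3)*(Real.sqrt 5)^2*ν^2 + (-8:ℝ)*(Real.sqrt 2)^3*(Real.sqrt 3)*(Real.sqrt 5)^2*t^2*ν^2 + (-4:ℝ)*(Real.sqrt 2)^3*(Real.sqrt 3)*(Real.sqrt 5)^2*t^4*ν^2) * hs2 + ((48:ℝ)*s + (120:ℝ)*s*ν^2 + (96:ℝ)*s*t^2 + (240:ℝ)*s*t^2*ν^2 + (48:ℝ)*s*t^4 + (120:ℝ)*s*t^4*ν^2 + (72:ℝ)*(Real.sqrt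 5)*s*ν + (144:ℝ)*(Real.sqrt 5)*s*t^2*ν + (72:ℝ)*(Real.sqrt 5)*s*t^4*ν + (-16:ℝ)*(Real.sqrt 3)^2*s*u^2 + (-16:ℝ)*(Real.sqrt 3)^2*s*u^2*t^2 + (-24:ℝ)*(Real.sqrt 3)^2*(Real.sqrt 5)*s*u^2*ν + (-24:ℝ)*(Real.sqrt 3)^2*(Real.sqrt 5)*s*u^2*t^2*ν + (-8:ℝ)*(Real.sqrt 3)^2*(Real.sqrt 5)^2*s*u^2*ν^2 + (-8:ℝ)*(Real.sqrt 3)^2*(Real.sqrt 5)^2*s*u^2*t^2*ν^2 + (-36:ℝ)*(Real.sqrt 2)*(Real.sqrt 3) + (-30:ℝ)*(Real.sqrt 2)*(Real.sqrt 3)*ν^2 + (-80:ℝ)*(Real.sqrt 2)*(Real.sqrt 3)*t^2 + (-60:ℝ)*(Real.sqrt 2)*(Real.sqrt 3)*t^2*ν^2 + (-52:ℝ)*(Real.sqrt 2)*(Real.sqrt 3)*t^4 + (-30:ℝ)*(Real.sqrt 2)*(Real.sqrt 3)*t^4*ν^2 + (-8:ℝ)*(Real.sqrt 2)*(Real.sqrt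 3)*t^6 + (-48:ℝ)*(Real.sqrt 2)*(Real.sqrt 3)*(Real.sqrt 5)*ν + (-112:ℝ)*(Real.sqrt 2)*(Real.sqrt 3)*(Real.sqrt 5)*t^2*ν + (-80:ℝ)*(Real.sqrt 2)*(Real.sqrt 3)*(Real.sqrt 5)*t^4*ν + (-16:ℝ)*(Real.sqrt 2)*(Real.sqrt 3)*(Real.sqrt 5)*t^6*ν + (-12:ℝ)*(Real.sqrt 2)*(Real.sqrt 3)*(Real.sqrt 5)^2*ν^2 + (-32:ℝ)*(Real.sqrt 2)*(Real.sqrt 3)*(Real.sqrt 5)^2*t^2*ν^2 + (-28:ℝ)*(Real.sqrt 2)*(Real.sqrt 3)*(Real.sqrt 5)^2*t^4*ν^2 + (-8:ℝ)*(Real.sqrt 2)*(Real.sqrt 3)*(Real.sqrt 5)^2*t^6*ν^2 + (4:ℝ)*(Real.sqrt 2)*(Real.sqrt 3)^3*u^2 + (4:ℝ)*(Real.sqrt 2)*(Real.sqrt 3)^3*u^2*t^2 + (8:ℝ)*(Real.sqrt 2)*(Real.sqrt 3)^3*(Real.sqrt 5)*u^2*ν + (8:ℝ)*(Real.sqrt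 2)*(Real.sqrt 3)^3*(Real.sqrt 5)*u^2*t^2*ν + (4:ℝ)*(Real.sqrt 2)*(Real.sqrt 3)^3*(Real.sqrt 5)^2*u^2*ν^2 + (4:ℝ)*(Real.sqrt 2)*(Real.sqrt 3)^3*(Real.sqrt 5)^2*u^2*t^2*ν^2 + (8:ℝ)*(Real.sqrt 2)^2*(Real.sqrt 3)^2*s + (16:ℝ)*(Real.sqrt 2)^2*(Real.sqrt 3)^2*s*t^2 + (8:ℝ)*(Real.sqrt 2)^2*(Real.sqrt 3)^2*s*t^4 + (12:ℝ)*(Real.sqrt 2)^2*(Real.sqrt 3)^2*(Real.sqrt 5)*s*ν + (24:ℝ)*(Real.sqrt 2)^2*(Real.sqrt 3)^2*(Real.sqrt 5)*s*t^2*ν + (12:ℝ)*(Real.sqrt 2)^2*(Real.sqrt 3)^2*(Real.sqrt 5)*s*t^4*ν + (4:ℝ)*(Real.sqrt 2)^2*(Real.sqrt 3)^2*(Real.sqrt 5)^2*s*ν^2 + (8:ℝ)*(Real.sqrt 2)^2*(Real.sqrt 3)^2*(Real.sqrt 5)^2*s*t^2*ν^2 + (4:ℝ)*(Real.sqrt 2)^2*(Real.sqrt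 3)^2*(Real.sqrt 5)^2*s*t^4*ν^2 + (-4:ℝ)*(Real.sqrt 2)^3*(Real.sqrt 3)^3 + (-8:ℝ)*(Real.sqrt 2)^3*(Real.sqrt 3)^3*t^2 + (-4:ℝ)*(Real.sqrt 2)^3*(Real.sqrt 3)^3*t^4 + (-4:ℝ)*(Real.sqrt 2)^3*(Real.sqrt 3)^3*(Real.sqrt 5)*ν + (-8:ℝ)*(Real.sqrt 2)^3*(Real.sqrt 3)^3*(Real.sqrt 5)*t^2*ν + (-4:ℝ)*(Real.sqrt 2)^3*(Real.sqrt 3)^3*(Real.sqrt 5)*t^4*ν + (-1:ℝ)*(Real.sqrt 2)^3*(Real.sqrt 3)^3*(Real.sqrt 5)^2*ν^2 + (-2:ℝ)*(Real.sqrt 2)^3*(Real.sqrt 3)^3*(Real.sqrt 5)^2*t^2*ν^2 + (-1:ℝ)*(Real.sqrt 2)^3*(Real.sqrt 3)^3*(Real.sqrt 5)^2*t^4*ν^2) * h2 + ((-32:ℝ)*s*u^2 + (-32:ℝ)*s*u^2*t^2 + (-48:ℝ)*(Real.sqrt 5)*s*u^2*ν + (-48:ℝ)*(Real.sqrt 5)*s*u^2*t^2*ν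 + (-16:ℝ)*(Real.sqrt 5)^2*s*u^2*ν^2 + (-16:ℝ)*(Real.sqrt 5)^2*s*u^2*t^2*ν^2 + (8:ℝ)*(Real.sqrt 2)*(Real.sqrt 3)*u^2 + (8:ℝ)*(Real.sqrt 2)*(Real.sqrt 3)*u^2*t^2 + (16:ℝ)*(Real.sqrt 2)*(Real.sqrt 3)*(Real.sqrt 5)*u^2*ν + (16:ℝ)*(Real.sqrt 2)*(Real.sqrt 3)*(Real.sqrt 5)*u^2*t^2*ν + (8:ℝ)*(Real.sqrt 2)*(Real.sqrt 3)*(Real.sqrt 5)^2*u^2*ν^2 + (8:ℝ)*(Real.sqrt 2)*(Real.sqrt 3)*(Real.sqrt 5)^2*u^2*t^2*ν^2 + (16:ℝ)*(Real.sqrt 2)^2*s + (32:ℝ)*(Real.sqrt 2)^2*s*t^2 + (16:ℝ)*(Real.sqrt 2)^2*s*t^4 + (24:ℝ)*(Real.sqrt 2)^2*(Real.sqrt 5)*s*ν + (48:ℝ)*(Real.sqrt 2)^2*(Real.sqrt 5)*s*t^2*ν + (24:ℝ)*(Real.sqrt 2)^2*(Real.sqrt 5)*s*t^4*ν + (8:ℝ)*(Real.sqrt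 2)^2*(Real.sqrt 5)^2*s*ν^2 + (16:ℝ)*(Real.sqrt 2)^2*(Real.sqrt 5)^2*s*t^2*ν^2 + (8:ℝ)*(Real.sqrt 2)^2*(Real.sqrt 5)^2*s*t^4*ν^2 + (-8:ℝ)*(Real.sqrt 2)^3*(Real.sqrt 3) + (-16:ℝ)*(Real.sqrt 2)^3*(Real.sqrt 3)*t^2 + (-8:ℝ)*(Real.sqrt 2)^3*(Real.sqrt 3)*t^4 + (-8:ℝ)*(Real.sqrt 2)^3*(Real.sqrt 3)*(Real.sqrt 5)*ν + (-16:ℝ)*(Real.sqrt 2)^3*(Real.sqrt 3)*(Real.sqrt 5)*t^2*ν + (-8:ℝ)*(Real.sqrt 2)^3*(Real.sqrt 3)*(Real.sqrt 5)*t^4*ν + (-2:ℝ)*(Real.sqrt 2)^3*(Real.sqrt 3)*(Real.sqrt 5)^2*ν^2 + (-4:ℝ)*(Real.sqrt 2)^3*(Real.sqrt 3)*(Real.sqrt 5)^2*t^2*ν^2 + (-2:ℝ)*(Real.sqrt 2)^3*(Real.sqrt 3)*(Real.sqrt 5)^2*t^4*ν^2) * h3 + ((-48:ℝ)*s*u^2*ν^2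 + (-48:ℝ)*s*u^2*t^2*ν^2 + (-24:ℝ)*(Real.sqrt 2)*(Real.sqrt 3)*ν^2 + (-56:ℝ)*(Real.sqrt 2)*(Real.sqrt 3)*t^2*ν^2 + (-40:ℝ)*(Real.sqrt 2)*(Real.sqrt 3)*t^4*ν^2 + (-8:ℝ)*(Real.sqrt 2)*(Real.sqrt 3)*t^6*ν^2 + (36:ℝ)*(Real.sqrt 2)*(Real.sqrt 3)*u^2*ν^2 + (44:ℝ)*(Real.sqrt 2)*(Real.sqrt 3)*u^2*t^2*ν^2 + (8:ℝ)*(Real.sqrt 2)*(Real.sqrt 3)*u^2*t^4*ν^2 + (24:ℝ)*(Real.sqrt 2)^2*s*ν^2 + (48:ℝ)*(Real.sqrt 2)^2*s*t^2*ν^2 + (24:ℝ)*(Real.sqrt 2)^2*s*t^4*ν^2 + (-6:ℝ)*(Real.sqrt 2)^3*(Real.sqrt 3)*ν^2 + (-12:ℝ)*(Real.sqrt 2)^3*(Real.sqrt 3)*t^2*ν^2 + (-6:ℝ)*(Real.sqrt 2)^3*(Real.sqrt 3)*t^4*ν^2) * h5
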